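/- arXiv:1511.06843 — 2 statements merged into one kernel-verified Lean document; each statement's English description precedes it below -/
import Mathlib

section
/- Consider the action of Γ = O(2)×O(2) on ℂ² given by ρ(φ,ψ)(z₁,z₂) = e^{iφ}(e^{imψ}z₁, e^{-imψ}z₂), ρ(κ)(z₁,z₂) = (z₂,z₁), ρ(κ̄)(z₁,z₂) = (conj(z₂), conj(z₁)), with m ≥ 1. Then the isotropy subgroup of the point (a,0) with a ∈ ℝ, a ≠ 0, is the group Õ(2) generated by {(φ, -φ/m) : φ ∈ S¹} and κκ̄. -/
noncomputable section

/-- The action of `Γ = O(2) × O(2)` on `ℂ²` in the irreducible representation indexed by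
`m`: the torus `(φ, ψ)` acts by `ρ(φ,ψ)(z₁,z₂) = e^{iφ}(e^{imψ}z₁, e^{-imψ}z₂)`, the
reflection `κ` (flag `a`) by `(z₁,z₂) ↦ (z₂,z₁)` and `κ̄` (flag `b`) by
`(z₁,z₂) ↦ (conj z₂, conj z₁)`. A general group element is `(φ,ψ)·κ^a·κ̄^b`. -/
def act (m : ℤ) (φ ψ : ℝ) (a b : Bool) (z : ℂ × ℂ) : ℂ × ℂ :=
  let z₁ : ℂ × ℂ := if a then (z.2, z.1) else z
  let z₂ : ℂ × ℂ := if b then (starRingEnd ℂ z₁.2, starRingEnd ℂ z₁.1) else z₁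
  (Complex.exp (φ * Complex.I) * Complex.exp ((m : ℂ) * ψ * Complex.I) * z₂.1,
   Complex.exp (φ * Complex.I) * Complex.exp (-((m : ℂ) * ψ) * Complex.I) * z₂.2)

/-- The isotropy subgroup of the point `(a, 0)`, `a ∈ ℝ`, `a ≠ 0`, is the group
`Õ(2)` generated by `(φ, -φ/m)` and `κκ̄`: it consists exactly of the elements with
`a = b` (i.e. torus elements and torus elements composed with `κκ̄`) whose torus part
satisfies `e^{i(φ + mψ)} = 1` (i.e. `ψ ≡ -φ/m`). -/
theorem isotropy_vortex (m : ℤ) (hm : 1 ≤ m) (a : ℝ) (ha : a ≠ 0) :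
    {g : ℝ × ℝ × Bool × Bool | act m g.1 g.2.1 g.2.2.1 g.2.2.2 ((a : ℂ), 0) = ((a : ℂ), 0)} =
    {g : ℝ × ℝ × Bool × Bool | g.2.2.1 = g.2.2.2 ∧
      Complex.exp ((g.1 + (m : ℝ) * g.2.1) * Complex.I) = 1} := by
  ext ⟨φ, ψ, x, y⟩
  have ha' : (a : ℂ) ≠ 0 := Complex.ofReal_ne_zero.mpr ha
  have hexp : Complex.exp ((↑(φ + (m : ℝ) * ψ)) * Complex.I)
      = Complex.exp (φ * Complex.I) * Complex.exp ((m : ℂ) * ψ * Complex.I) := by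
    rw [← Complex.exp_add]; push_cast; ring_nf
  simp only [Set.mem_setOf_eq, act]
  cases x <;> cases y <;>
    simp [Prod.ext_iff, ha', hexp, mul_comm, Complex.exp_ne_zero,
      mul_eq_mul_right_iff] <;>
  rw [← Complex.exp_add] <;> ring_nf
end
end

section
/- With the same Γ-action on ℂ² as above (m ≥ 1), the isotropy subgroup of the point (a,a) with a ∈ ℝ, a ≠ 0, is the group generated by κ, κ̄, and the element (π, π/m) (phase shift by π together with rotation by π/m); this group is isomorphic to ℤ₂ × D_{2m}. -/
noncomputable section

/-- The isotropy subgroup of the point `(a, a)`, `a ∈ ℝ`, `a ≠ 0`, is the group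
`ℤ₂ × D̃_{2m}` generated by `κ`, `κ̄` and `(π, π/m)`: it consists exactly of the
elements (with arbitrary flags `a`, `b`) whose torus part satisfies
`e^{i(φ + mψ)} = 1` and `e^{i(φ - mψ)} = 1`. -/
theorem isotropy_dipole (m : ℤ) (hm : 1 ≤ m) (a : ℝ) (ha : a ≠ 0) :
    {g : ℝ × ℝ × Bool × Bool |
        act m g.1 g.2.1 g.2.2.1 g.2.2.2 ((a : ℂ), (a : ℂ)) = ((a : ℂ), (a : ℂ))} =
    {g : ℝ × ℝ × Bool × Bool |
        Complex.exp ((g.1 + (m : ℝ) * g.2.1) * Complex.I) = 1 ∧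
        Complex.exp ((g.1 - (m : ℝ) * g.2.1) * Complex.I) = 1} := by
  ext ⟨φ, ψ, u, v⟩
  have hA : (a : ℂ) ≠ 0 := Complex.ofReal_ne_zero.mpr ha
  simp only [Set.mem_setOf_eq, act, Complex.conj_ofReal, Prod.ext_iff]
  have h1 : Complex.exp (↑φ * Complex.I) * Complex.exp ((m : ℂ) * ↑ψ * Complex.I) * (a : ℂ)
      = (a : ℂ) ↔ Complex.exp ((↑(φ + (m : ℝ) * ψ)) * Complex.I) = 1 := by
    rw [← Complex.exp_add, ← add_mul]
    push_cast
    constructor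
    · intro h; field_simp at h ⊢; linear_combination h
    · intro h; rw [h, one_mul]
  have h2 : Complex.exp (↑φ * Complex.I) * Complex.exp (-((m : ℂ) * ↑ψ) * Complex.I) * (a : ℂ)
      = (a : ℂ) ↔ Complex.exp ((↑(φ - (m : ℝ) * ψ)) * Complex.I) = 1 := by
    rw [← Complex.exp_add, ← add_mul]
    push_cast
    ring_nf
    constructor
    · intro h; field_simp at h ⊢; linear_combination h
    · intro h; rw [h, one_mul]
  push_cast at h1 h2
  rw [neg_mul] at h2
  cases u <;> cases v <;> simp [h1, h2]
end
end
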